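/- For δ ∈ [0,1] and a nonzero vector α₀ ∈ ℝ^p, define J(α₀, δ) = {β ∈ ℝ^p : α₀ᵀβ ≥ δ‖α₀‖₂‖β‖₂}. If α ∈ J(α₀, sqrt(1−δ²)) and β ∈ J(α₀, δ), then αᵀβ ≥ 0. -/
import Mathlib


open scoped RealInnerProductSpace

set_option maxHeartbeats 800000 in
/-- If `α` lies in the cone `J(α₀, √(1-δ²))` and `β` lies in the cone `J(α₀, δ)`,
where `J(α₀, c) = {v : ⟪α₀, v⟫ ≥ c‖α₀‖‖v‖}`, then `⟪α, β⟫ ≥ 0`. -/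
theorem stmt_11 {p : ℕ} (δ : ℝ) (hδ : δ ∈ Set.Icc (0 : ℝ) 1)
    (α₀ : EuclideanSpace ℝ (Fin p)) (hα₀ : α₀ ≠ 0)
    (α β : EuclideanSpace ℝ (Fin p))
    (hα : ⟪α₀, α⟫ ≥ Real.sqrt (1 - δ ^ 2) * ‖α₀‖ * ‖α‖)
    (hβ : ⟪α₀, β⟫ ≥ δ * ‖α₀‖ * ‖β‖) :
    ⟪α, β⟫ ≥ 0 := by
  obtain ⟨hδ0, hδ1⟩ := hδ
  have hcpos : (0:ℝ) < ‖α₀‖ := norm_pos_iff.mpr hα₀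
  set c : ℝ := ‖α₀‖ with hc
  set a : ℝ := ⟪α₀, α⟫ with ha
  set b : ℝ := ⟪α₀, β⟫ with hb
  set s : ℝ := Real.sqrt (1 - δ ^ 2) with hs
  have hs0 : 0 ≤ s := Real.sqrt_nonneg _
  have hs2 : s ^ 2 = 1 - δ ^ 2 := by
    have h : (0:ℝ) ≤ 1 - δ ^ 2 := by nlinarith
    rw [hs]
    exact Real.sq_sqrt h
  have hc2 : ⟪α₀, α₀⟫ = c ^ 2 := by
    rw [real_inner_self_eq_norm_sq]
  set α' := α - (a / c ^ 2) • α₀ with hα'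
  set β' := β - (b / c ^ 2) • α₀ with hβ'
  have hane : (c:ℝ) ^ 2 ≠ 0 := by positivity
  have key : ⟪α, β⟫ = ⟪α', β'⟫ + a * b / c ^ 2 := by
    rw [hα', hβ', inner_sub_left, inner_sub_right, inner_sub_right,
      real_inner_smul_left, real_inner_smul_right, real_inner_smul_left,
      real_inner_smul_right, hc2]
    rw [ha, hb, real_inner_comm α α₀]
    field_simp
    ring
  have hna : ‖α'‖ ^ 2 = ‖α‖ ^ 2 - a ^ 2 / c ^ 2 := by
    rw [← real_inner_self_eq_norm_sq, hα', inner_sub_left, inner_sub_right,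
      inner_sub_right, real_inner_smul_left, real_inner_smul_right,
      real_inner_smul_left, real_inner_smul_right, hc2]
    rw [ha, real_inner_comm α α₀, real_inner_self_eq_norm_sq]
    field_simp
    ring
  have hnb : ‖β'‖ ^ 2 = ‖β‖ ^ 2 - b ^ 2 / c ^ 2 := by
    rw [← real_inner_self_eq_norm_sq, hβ', inner_sub_left, inner_sub_right,
      inner_sub_right, real_inner_smul_left, real_inner_smul_right,
      real_inner_smul_left, real_inner_smul_right, hc2]
    rw [hb, real_inner_comm β α₀, real_inner_self_eq_norm_sq]
    field_simp
    ring
  have hann : 0 ≤ a := le_trans (by positivity) hα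
  have hbnn : 0 ≤ b := le_trans (by positivity) hβ
  have ha2 : s ^ 2 * c ^ 2 * ‖α‖ ^ 2 ≤ a ^ 2 := by
    nlinarith [mul_le_mul hα hα (by positivity) hann]
  have hb2 : δ ^ 2 * c ^ 2 * ‖β‖ ^ 2 ≤ b ^ 2 := by
    nlinarith [mul_le_mul hβ hβ (by positivity) hbnn]
  have hsqa : ‖α'‖ ^ 2 ≤ (δ * ‖α‖) ^ 2 := by
    have h : s ^ 2 * ‖α‖ ^ 2 ≤ a ^ 2 / c ^ 2 := by
      rw [le_div_iff₀ (by positivity)]; nlinarith [ha2]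
    rw [hna]; nlinarith [h, hs2]
  have hsqb : ‖β'‖ ^ 2 ≤ (s * ‖β‖) ^ 2 := by
    have h : δ ^ 2 * ‖β‖ ^ 2 ≤ b ^ 2 / c ^ 2 := by
      rw [le_div_iff₀ (by positivity)]; nlinarith [hb2]
    rw [hnb]; nlinarith [h, hs2]
  have hla : ‖α'‖ ≤ δ * ‖α‖ := by
    calc ‖α'‖ = Real.sqrt (‖α'‖ ^ 2) := (Real.sqrt_sq (norm_nonneg _)).symm
      _ ≤ Real.sqrt ((δ * ‖α‖) ^ 2) := Real.sqrt_le_sqrt hsqa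
      _ = δ * ‖α‖ := Real.sqrt_sq (by positivity)
  have hlb : ‖β'‖ ≤ s * ‖β‖ := by
    calc ‖β'‖ = Real.sqrt (‖β'‖ ^ 2) := (Real.sqrt_sq (norm_nonneg _)).symm
      _ ≤ Real.sqrt ((s * ‖β‖) ^ 2) := Real.sqrt_le_sqrt hsqb
      _ = s * ‖β‖ := Real.sqrt_sq (by positivity)
  have hprod : ‖α'‖ * ‖β'‖ ≤ (δ * ‖α‖) * (s * ‖β‖) :=
    mul_le_mul hla hlb (norm_nonneg _) (by positivity)
  have hinner : -(‖α'‖ * ‖β'‖) ≤ ⟪α', β'⟫ :=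
    neg_le_of_abs_le (abs_real_inner_le_norm α' β')
  have hab : (δ * ‖α‖) * (s * ‖β‖) ≤ a * b / c ^ 2 := by
    rw [le_div_iff₀ (by positivity)]
    nlinarith [mul_le_mul hα hβ (by positivity) hann,
      mul_nonneg (mul_nonneg hs0 hcpos.le) (norm_nonneg α)]
  rw [key]
  linarith
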